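/- In the Warden's Game on S ⊆ T(n,k) (closed under rotations) with goal α, define remoteness r(β) as the length of the game from β under optimal play (∞ if the warden can play forever), with r treated so that α as an end position has remoteness 0. If for some positive integer m no position has remoteness m, then no position has remoteness m+1. -/
import Mathlib


namespace UCG

abbrev Str (n k : ℕ) := Fin n → Fin k

def OneUp {n k : ℕ} (β γ : Str n k) : Prop :=
  ∃ i : Fin n, β i < γ i ∧ ∀ j : Fin n, j ≠ i → β j = γ j

def IncrTo {n k : ℕ} (S : Set (Str n k)) (β α : Str n k) : Prop :=
  β ∈ S ∧ Relation.ReflTransGen (fun x y => OneUp x y ∧ y ∈ S) β α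

def IsRotation {n k : ℕ} (β γ : Str n k) : Prop :=
  ∃ j : ℕ, ∀ i : Fin n, γ i = β ⟨(i.val + j) % n, Nat.mod_lt _ i.pos⟩

def ClosedUnderRot {n k : ℕ} (S : Set (Str n k)) : Prop :=
  ∀ β ∈ S, ∀ γ, IsRotation β γ → γ ∈ S

def shift {n k : ℕ} (c : Fin k) (β : Str n k) : Str n k :=
  fun i => if i.val = 0 then c else β ⟨i.val - 1, lt_of_le_of_lt (Nat.sub_le _ _) i.isLt⟩

def lastSym {n k : ℕ} (hn : 0 < n) (β : Str n k) : Fin k :=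
  β ⟨n - 1, Nat.sub_lt hn one_pos⟩

/-- `WinIn hn S tgt β m`: in the Warden's Game with legal positions `S`, starting
from position `β`, the prisoner can force the position `tgt` to be reached within
at most `m` moves, whatever the warden does.  A move from `β = γb` is either a
warden move to `cγ ∈ S` with `c < b`, or (if the warden passes) a prisoner move
to `cγ ∈ S` with `c ≥ b`. -/
inductive WinIn {n k : ℕ} (hn : 0 < n) (S : Set (Str n k)) (tgt : Str n k) :
    Str n k → ℕ → Prop
  | passWin (β : Str n k) (m : ℕ) (c : Fin k)
      (hc : lastSym hn β ≤ c) (hcS : shift c β ∈ S) (heq : shift c β = tgt)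
      (hW : ∀ c' : Fin k, c' < lastSym hn β → shift c' β ∈ S → shift c' β ≠ tgt →
        WinIn hn S tgt (shift c' β) m) :
      WinIn hn S tgt β (m + 1)
  | passStep (β : Str n k) (m : ℕ) (c : Fin k)
      (hc : lastSym hn β ≤ c) (hcS : shift c β ∈ S)
      (hwin : WinIn hn S tgt (shift c β) m)
      (hW : ∀ c' : Fin k, c' < lastSym hn β → shift c' β ∈ S → shift c' β ≠ tgt →
        WinIn hn S tgt (shift c' β) m) :
      WinIn hn S tgt β (m + 1)

noncomputable def remoteness {n k : ℕ} (hn : 0 < n) (S : Set (Str n k))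
    (tgt β : Str n k) : ℕ∞ :=
  sInf {e : ℕ∞ | ∃ t : ℕ, e = t ∧ WinIn hn S tgt β t}

def fshift {n k : ℕ} (b : Fin k) (β : Str n k) : Str n k :=
  fun i => if h : i.val = n - 1 then b else β ⟨i.val + 1, by have := i.isLt; omega⟩

def GreedyOk {n k : ℕ} (S : Set (Str n k)) (B : ℕ → Option (Str n k)) (m : ℕ)
    (β : Str n k) (b : Fin k) : Prop :=
  fshift b β ∈ S ∧ ∀ i : ℕ, 1 ≤ i → i ≤ m → B i ≠ some (fshift b β)

def IsGreedy {n k : ℕ} (S : Set (Str n k)) (α : Str n k)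
    (B : ℕ → Option (Str n k)) : Prop :=
  B 0 = some α ∧
  (∀ m : ℕ, B m = none → B (m + 1) = none) ∧
  ∀ m : ℕ, ∀ β : Str n k, B m = some β →
    ((1 ≤ m ∧ β = α) → B (m + 1) = none) ∧
    ((m = 0 ∨ β ≠ α) →
      ((¬ ∃ b : Fin k, GreedyOk S B m β b) → B (m + 1) = none) ∧
      (∀ b : Fin k, GreedyOk S B m β b → (∀ b' : Fin k, b' < b → ¬ GreedyOk S B m β b') →
        B (m + 1) = some (fshift b β)))

def CycSubstr {m n k : ℕ} (hn : 0 < n) (γ : Str m k) (β : Str n k) : Prop :=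
  ∃ j : ℕ, ∀ i : Fin m, β ⟨(j + i.val) % n, Nat.mod_lt _ hn⟩ = γ i

theorem WinIn.succ {n k : ℕ} {hn : 0 < n} {S : Set (Str n k)} {tgt : Str n k}
    {β : Str n k} {t : ℕ} (hw : WinIn hn S tgt β t) : WinIn hn S tgt β (t + 1) := by
  induction hw with
  | passWin β m c hc hcS heq hW ih =>
      exact .passWin β (m + 1) c hc hcS heq (fun c' h1 h2 h3 => ih c' h1 h2 h3)
  | passStep β m c hc hcS hwin hW ih1 ih2 =>
      exact .passStep β (m + 1) c hc hcS ih1 (fun c' h1 h2 h3 => ih2 c' h1 h2 h3)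

theorem WinIn.mono {n k : ℕ} {hn : 0 < n} {S : Set (Str n k)} {tgt : Str n k}
    {β : Str n k} {s t : ℕ} (hst : s ≤ t) (hw : WinIn hn S tgt β s) :
    WinIn hn S tgt β t := by
  induction t, hst using Nat.le_induction with
  | base => exact hw
  | succ t hst ih => exact ih.succ

theorem remoteness_le_iff {n k : ℕ} (hn : 0 < n) (S : Set (Str n k))
    (tgt β : Str n k) (t : ℕ) :
    remoteness hn S tgt β ≤ (t : ℕ∞) ↔ WinIn hn S tgt β t := by
  constructor
  · intro hle
    by_contra hw
    have h1 : ((t + 1 : ℕ) : ℕ∞) ≤ remoteness hn S tgt β := by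
      apply le_sInf
      rintro e ⟨s, rfl, hs⟩
      by_contra hlt
      push_neg at hlt
      have hst : s ≤ t := by
        have : s < t + 1 := by exact_mod_cast hlt
        omega
      exact hw (hs.mono hst)
    have : ((t + 1 : ℕ) : ℕ∞) ≤ (t : ℕ∞) := h1.trans hle
    have : t + 1 ≤ t := by exact_mod_cast this
    omega
  · intro hw
    exact sInf_le ⟨t, rfl, hw⟩

/-- if no position in `S` has remoteness `m` (for `m > 0`), then no
position has remoteness `m + 1`. -/
theorem no_remoteness_gap {n k : ℕ} (hn : 0 < n) (S : Set (Str n k))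
    (hS : ClosedUnderRot S) (α : Str n k) (hα : α ∈ S) (m : ℕ) (hm : 0 < m)
    (h : ∀ β ∈ S, remoteness hn S α β ≠ (m : ℕ∞)) :
    ∀ β ∈ S, remoteness hn S α β ≠ ((m + 1 : ℕ) : ℕ∞) := by
  obtain ⟨m', rfl⟩ : ∃ m', m = m' + 1 := ⟨m - 1, (Nat.succ_pred_eq_of_pos hm).symm⟩
  intro β hβ hrem
  have hw1 : WinIn hn S α β (m' + 1 + 1) :=
    (remoteness_le_iff hn S α β _).mp (le_of_eq hrem)
  have hnw : ¬ WinIn hn S α β (m' + 1) := by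
    intro hw
    have := (remoteness_le_iff hn S α β _).mpr hw
    rw [hrem] at this
    have : m' + 1 + 1 ≤ m' + 1 := by exact_mod_cast this
    omega
  have sub : ∀ γ : Str n k, γ ∈ S → WinIn hn S α γ (m' + 1) → WinIn hn S α γ m' := by
    intro γ hγ hw
    by_contra hnw'
    apply h γ hγ
    refine le_antisymm ((remoteness_le_iff hn S α γ _).mpr hw) ?_
    apply le_sInf
    rintro e ⟨s, rfl, hs⟩
    by_contra hlt
    push_neg at hlt
    have : s < m' + 1 := by exact_mod_cast hlt
    exact hnw' (hs.mono (by omega))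
  cases hw1 with
  | passWin _ _ c hc hcS heq hW =>
      exact hnw (.passWin β m' c hc hcS heq
        (fun c' h1 h2 h3 => sub _ h2 (hW c' h1 h2 h3)))
  | passStep _ _ c hc hcS hwin hW =>
      exact hnw (.passStep β m' c hc hcS (sub _ hcS hwin)
        (fun c' h1 h2 h3 => sub _ h2 (hW c' h1 h2 h3)))

end UCG
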